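/- Let σ : [0,T] → ℝ be continuous. Then the function t ↦ ‖σ‖_t² = ∫₀ᵗ ∫₀ᵗ φ(u−v) σ(u) σ(v) du dv is differentiable on (0,T) with derivative (d/dt)‖σ‖_t² = 2 σ̂_t σ(t), where σ̂_t = ∫₀ᵗ φ(t−v) σ(v) dv. -/

import Mathlib

open MeasureTheory intervalIntegral Set Filter
open scoped Topology

private lemma fbm_meas_abs_rpow (α : ℝ) : Measurable fun w : ℝ => |w| ^ α := by
  measurability

private lemma fbm_meas_abs_rpow2 (α : ℝ) : Measurable fun p : ℝ × ℝ => |p.1 - p.2| ^ α := by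
  measurability

private lemma fbm_II_abs_rpow {α : ℝ} (hα : -1 < α) (a b : ℝ) :
    IntervalIntegrable (fun w => |w| ^ α) volume a b := by
  have key : ∀ c : ℝ, 0 ≤ c → IntervalIntegrable (fun w : ℝ => |w| ^ α) volume 0 c := by
    intro c hc
    have h1 : IntervalIntegrable (fun w : ℝ => w ^ α) volume 0 c :=
      intervalIntegrable_rpow' hα
    rw [intervalIntegrable_iff, uIoc_of_le hc] at h1 ⊢
    exact h1.congr_fun (fun w hw => by rw [abs_of_pos hw.1]) measurableSet_Ioc
  have all : ∀ c : ℝ, IntervalIntegrable (fun w : ℝ => |w| ^ α) volume 0 c := by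
    intro c
    rcases le_total 0 c with hc | hc
    · exact key c hc
    · have h2 := key (-c) (by linarith)
      rw [IntervalIntegrable.iff_comp_neg] at h2
      simpa using h2
  exact (all a).symm.trans (all b)

private lemma fbm_II_abs_rpow_sub {α : ℝ} (hα : -1 < α) (c a b : ℝ) :
    IntervalIntegrable (fun v => |c - v| ^ α) volume a b := by
  have h := (fbm_II_abs_rpow hα (c - a) (c - b)).comp_sub_left c
  simpa using h

private lemma fbm_setint_bound {α : ℝ} (hα : -1 < α) (R u r : ℝ) (hu : |u| ≤ R)
    (h0r : 0 ≤ r) (hrR : r ≤ R) :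
    ∫ v in Ioc (0:ℝ) r, |u - v| ^ α ≤ ∫ w in (-(2*R))..(2*R), |w| ^ α := by
  obtain ⟨hu1, hu2⟩ := abs_le.mp hu
  have h1 : ∫ v in Ioc (0:ℝ) r, |u - v| ^ α = ∫ v in (0:ℝ)..r, |u - v| ^ α :=
    (intervalIntegral.integral_of_le h0r).symm
  have h2 : ∫ v in (0:ℝ)..r, |u - v| ^ α = ∫ w in (u - r)..(u - 0), |w| ^ α :=
    intervalIntegral.integral_comp_sub_left (fun w => |w| ^ α) u
  rw [h1, h2, sub_zero]
  have hR : 0 ≤ R := le_trans h0r hrR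
  apply intervalIntegral.integral_mono_interval (by linarith) (by linarith) (by linarith)
  · exact Filter.Eventually.of_forall fun w => Real.rpow_nonneg (abs_nonneg w) α
  · exact fbm_II_abs_rpow hα _ _

set_option maxHeartbeats 1000000 in
/-- Differentiability of `t ↦ ‖σ‖_t² = ∫₀ᵗ ∫₀ᵗ φ(u−v) σ(u) σ(v) du dv` on `(0,T)`,
with derivative `2 σ̂_t σ(t)`, where `σ̂_t = ∫₀ᵗ φ(t−v) σ(v) dv` and
`φ(x) = H(2H−1)|x|^{2H−2}`, `H ∈ (1/2,1)`. -/
theorem fbm_norm_sq_hasDerivAt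
    (H T : ℝ) (hH : H ∈ Set.Ioo (1/2 : ℝ) 1) (hT : 0 < T)
    (σ : ℝ → ℝ) (hσ : ContinuousOn σ (Set.Icc 0 T)) :
    ∀ t ∈ Set.Ioo (0:ℝ) T,
      HasDerivAt
        (fun r => ∫ u in (0:ℝ)..r, ∫ v in (0:ℝ)..r,
            (H * (2*H - 1) * |u - v| ^ (2*H - 2)) * σ u * σ v)
        (2 * (∫ v in (0:ℝ)..t, H * (2*H - 1) * |t - v| ^ (2*H - 2) * σ v) * σ t)
        t := by
  obtain ⟨hH1, hH2⟩ := hH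
  intro t ht
  obtain ⟨ht0, htT⟩ := ht
  have hα : (-1:ℝ) < 2*H - 2 := by linarith
  have hC : 0 < H * (2*H - 1) := by nlinarith
  set α : ℝ := 2*H - 2 with hαdef
  set C : ℝ := H * (2*H - 1) with hCdef
  have hT0 : (0:ℝ) ≤ T := hT.le
  -- continuous bounded extension of σ
  set g : ℝ → ℝ := fun x => min (max x 0) T with hgdef
  have hgmem : ∀ x, g x ∈ Icc (0:ℝ) T := fun x =>
    ⟨le_min (le_max_right x 0) hT0, min_le_right _ _⟩
  set σ' : ℝ → ℝ := fun x => σ (g x) with hσ'def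
  have hgcont : Continuous g := (continuous_id.max continuous_const).min continuous_const
  have hσ'cont : Continuous σ' := hσ.comp_continuous hgcont hgmem
  have hσ'eq : ∀ x ∈ Icc (0:ℝ) T, σ' x = σ x := by
    intro x hx
    simp only [hσ'def, hgdef]
    rw [max_eq_left hx.1, min_eq_left hx.2]
  obtain ⟨M0, hM0⟩ :=
    (isCompact_Icc : IsCompact (Icc (0:ℝ) T)).exists_bound_of_continuousOn hσ
  set M : ℝ := max M0 0 with hMdef
  have hM : ∀ x, |σ' x| ≤ M := fun x =>
    le_trans (hM0 (g x) (hgmem x)) (le_max_left _ _)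
  have hMnn : (0:ℝ) ≤ M := le_max_right _ _
  -- the "hat" function and the FTC integrand
  set S : ℝ → ℝ := fun u => ∫ v in (0:ℝ)..u, C * |u - v| ^ α * σ' v with hSdef
  set φh : ℝ → ℝ := fun u => 2 * σ' u * S u with hφhdef
  -- interval integrability building blocks
  have hII1 : ∀ u a b : ℝ, IntervalIntegrable (fun v => C * |u - v| ^ α * σ' v) volume a b :=
    fun u a b =>
      ((fbm_II_abs_rpow_sub hα u a b).const_mul C).mul_continuousOn hσ'cont.continuousOn
  have hII2 : ∀ u a b : ℝ,
      IntervalIntegrable (fun v => C * |u - v| ^ α * σ' u * σ' v) volume a b :=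
    fun u a b =>
      (((fbm_II_abs_rpow_sub hα u a b).const_mul C).mul_const (σ' u)).mul_continuousOn
        hσ'cont.continuousOn
  -- substitution for S
  have hSsub : ∀ u : ℝ, S u = ∫ w in (0:ℝ)..u, C * |w| ^ α * σ' (u - w) := by
    intro u
    have h := intervalIntegral.integral_comp_sub_left (a := 0) (b := u)
      (fun w => C * |w| ^ α * σ' (u - w)) u
    simp only [sub_sub_cancel, sub_self, sub_zero] at h
    simp only [hSdef]
    exact h
  -- continuity of S on (0, ∞)
  have hScont : ∀ u₀ : ℝ, 0 < u₀ → ContinuousAt S u₀ := by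
    intro u₀ hu₀
    set b : ℝ := u₀ + 1 with hbdef
    have hb0 : (0:ℝ) < b := by rw [hbdef]; linarith
    set F : ℝ → ℝ → ℝ :=
      fun u w => Set.indicator (Set.Ioc 0 u) (fun w => C * |w| ^ α * σ' (u - w)) w with hFdef
    have habs : Measurable fun w : ℝ => |w| ^ α := fbm_meas_abs_rpow α
    have hmeasF : ∀ u, AEStronglyMeasurable (F u) (volume.restrict (Set.uIoc (0:ℝ) b)) := by
      intro u
      apply Measurable.aestronglyMeasurable
      simp only [hFdef]
      exact ((habs.const_mul C).mul
        (hσ'cont.measurable.comp (measurable_const.sub measurable_id))).indicator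
        measurableSet_Ioc
    have hbound : ∀ u, ∀ᵐ w ∂volume, w ∈ Set.uIoc (0:ℝ) b → ‖F u w‖ ≤ C * |w| ^ α * M := by
      intro u
      refine Filter.Eventually.of_forall fun w _ => ?_
      simp only [hFdef]
      have hnn : (0:ℝ) ≤ C * |w| ^ α :=
        mul_nonneg hC.le (Real.rpow_nonneg (abs_nonneg w) α)
      by_cases hw : w ∈ Ioc 0 u
      · rw [Set.indicator_of_mem hw]
        rw [Real.norm_eq_abs]
        calc |C * |w| ^ α * σ' (u - w)| = (C * |w| ^ α) * |σ' (u - w)| := by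
              rw [abs_mul, abs_of_nonneg hnn]
          _ ≤ C * |w| ^ α * M := mul_le_mul_of_nonneg_left (hM _) hnn
      · rw [Set.indicator_of_notMem hw]
        simpa using mul_nonneg hnn hMnn
    have hbi : IntervalIntegrable (fun w => C * |w| ^ α * M) volume 0 b :=
      ((fbm_II_abs_rpow hα 0 b).const_mul C).mul_const M
    have hcontF : ∀ᵐ w ∂volume, w ∈ Set.uIoc (0:ℝ) b → ContinuousAt (fun u => F u w) u₀ := by
      have hne : ∀ᵐ w : ℝ ∂volume, w ≠ u₀ := by
        rw [ae_iff]
        simp only [ne_eq, not_not, setOf_eq_eq_singleton]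
        exact measure_singleton u₀
      filter_upwards [hne] with w hw _
      rcases lt_or_gt_of_ne hw with hlt | hgt
      · by_cases hw0 : 0 < w
        · have hev : (fun u => F u w) =ᶠ[𝓝 u₀] fun u => C * |w| ^ α * σ' (u - w) := by
            filter_upwards [Ioi_mem_nhds hlt] with u hu
            simp only [hFdef]
            exact Set.indicator_of_mem (Set.mem_Ioc.mpr ⟨hw0, le_of_lt hu⟩) _
          have hGc : ContinuousAt (fun u => C * |w| ^ α * σ' (u - w)) u₀ :=
            (continuous_const.mul
              (hσ'cont.comp (continuous_id.sub continuous_const))).continuousAt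
          exact hGc.congr hev.symm
        · have : (fun u => F u w) = fun _ => 0 := by
            funext u
            simp only [hFdef]
            exact Set.indicator_of_notMem (fun hmem => hw0 hmem.1) _
          rw [this]; exact continuousAt_const
      · have hev : (fun u => F u w) =ᶠ[𝓝 u₀] fun _ => (0:ℝ) := by
          filter_upwards [Iio_mem_nhds hgt] with u hu
          simp only [hFdef]
          exact Set.indicator_of_notMem (fun hmem => absurd hmem.2 (not_le.mpr hu)) _
        exact continuousAt_const.congr hev.symm
    have hcont2 : ContinuousAt (fun u => ∫ w in (0:ℝ)..b, F u w) u₀ :=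
      intervalIntegral.continuousAt_of_dominated_interval (.of_forall hmeasF)
        (.of_forall hbound) hbi hcontF
    have hSev : S =ᶠ[𝓝 u₀] fun u => ∫ w in (0:ℝ)..b, F u w := by
      filter_upwards [Ioo_mem_nhds hu₀ (by rw [hbdef]; linarith : u₀ < b)] with u hu
      rw [hSsub u, hFdef]
      rw [intervalIntegral.integral_of_le hb0.le,
        MeasureTheory.setIntegral_indicator measurableSet_Ioc,
        Set.Ioc_inter_Ioc, max_self, min_eq_right hu.2.le,
        ← intervalIntegral.integral_of_le hu.1.le]
    exact hcont2.congr hSev.symm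
  -- bound for S
  set c₁ : ℝ := ∫ w in (-(2*T))..(2*T), |w| ^ α with hc₁def
  have hc₁nn : 0 ≤ c₁ := by
    rw [hc₁def]
    exact intervalIntegral.integral_nonneg (by linarith)
      (fun w _ => Real.rpow_nonneg (abs_nonneg w) α)
  have habsint : ∀ u r : ℝ, |u| ≤ T → 0 ≤ r → r ≤ T →
      (∫ v in (0:ℝ)..r, |u - v| ^ α) ≤ c₁ := by
    intro u r h1 h2 h3
    rw [intervalIntegral.integral_of_le h2, hc₁def]
    exact fbm_setint_bound hα T u r h1 h2 h3
  have hSbdd : ∀ u ∈ Ioc (0:ℝ) T, |S u| ≤ C * M * c₁ := by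
    intro u hu
    have huT : |u| ≤ T := abs_le.mpr ⟨by linarith [hu.1], hu.2⟩
    have h1 : |S u| ≤ ∫ v in (0:ℝ)..u, C * |u - v| ^ α * M := by
      simp only [hSdef]
      calc |∫ v in (0:ℝ)..u, C * |u - v| ^ α * σ' v|
          ≤ ∫ v in (0:ℝ)..u, |C * |u - v| ^ α * σ' v| := by
            have hni := intervalIntegral.norm_integral_le_integral_norm (f := fun v =>
                C * |u - v| ^ α * σ' v) (μ := volume) (a := 0) (b := u) hu.1.le
            simp only [Real.norm_eq_abs] at hni
            exact hni
        _ ≤ ∫ v in (0:ℝ)..u, C * |u - v| ^ α * M := by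
            apply intervalIntegral.integral_mono_on hu.1.le ((hII1 u 0 u).abs)
              (((fbm_II_abs_rpow_sub hα u 0 u).const_mul C).mul_const M)
            intro v _
            have hnn : (0:ℝ) ≤ C * |u - v| ^ α :=
              mul_nonneg hC.le (Real.rpow_nonneg (abs_nonneg _) α)
            rw [abs_mul, abs_of_nonneg hnn]
            exact mul_le_mul_of_nonneg_left (hM v) hnn
    have h2 : (∫ v in (0:ℝ)..u, C * |u - v| ^ α * M)
        = (C * M) * ∫ v in (0:ℝ)..u, |u - v| ^ α := by
      rw [show (fun v => C * |u - v| ^ α * M) = fun v => (C * M) * |u - v| ^ α by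
        funext v; ring]
      exact intervalIntegral.integral_const_mul _ _
    calc |S u| ≤ (C * M) * ∫ v in (0:ℝ)..u, |u - v| ^ α := by rw [← h2]; exact h1
      _ ≤ C * M * c₁ := by
          apply mul_le_mul_of_nonneg_left (habsint u u huT hu.1.le hu.2)
          exact mul_nonneg hC.le hMnn
  -- continuity of φh on (0, ∞)
  have hφhCont : ∀ u : ℝ, 0 < u → ContinuousAt φh u := by
    intro u hu
    have h1 : ContinuousAt (fun u => 2 * σ' u * S u) u :=
      (continuousAt_const.mul hσ'cont.continuousAt).mul (hScont u hu)
    simp only [hφhdef]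
    exact h1
  have hφhBdd : ∀ u ∈ Ioc (0:ℝ) T, |φh u| ≤ 2 * M * (C * M * c₁) := by
    intro u hu
    simp only [hφhdef]
    have h1 := hM u
    have h2 := hSbdd u hu
    calc |2 * σ' u * S u| = 2 * |σ' u| * |S u| := by
          rw [abs_mul, abs_mul, abs_two]
      _ ≤ 2 * M * (C * M * c₁) := by
          apply mul_le_mul (by linarith [abs_nonneg (σ' u)]) h2 (abs_nonneg _)
          linarith [abs_nonneg (σ' u)]
  -- the key Fubini identity
  have key : ∀ r ∈ Ioo (0:ℝ) T,
      (∫ u in (0:ℝ)..r, ∫ v in (0:ℝ)..r, C * |u - v| ^ α * σ' u * σ' v)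
        = ∫ u in (0:ℝ)..r, φh u := by
    intro r hr
    obtain ⟨hr0, hrT⟩ := hr
    set Kp : ℝ × ℝ → ℝ := fun p => C * |p.1 - p.2| ^ α * σ' p.1 * σ' p.2 with hKpdef
    have habs2 : Measurable fun p : ℝ × ℝ => |p.1 - p.2| ^ α := fbm_meas_abs_rpow2 α
    have hKpmeas : AEStronglyMeasurable Kp
        ((volume.restrict (Ioc (0:ℝ) r)).prod (volume.restrict (Ioc (0:ℝ) r))) := by
      apply Measurable.aestronglyMeasurable
      simp only [hKpdef]
      exact ((habs2.const_mul C).mul (hσ'cont.measurable.comp measurable_fst)).mul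
        (hσ'cont.measurable.comp measurable_snd)
    have hKpInt : Integrable Kp
        ((volume.restrict (Ioc (0:ℝ) r)).prod (volume.restrict (Ioc (0:ℝ) r))) := by
      rw [MeasureTheory.integrable_prod_iff hKpmeas]
      constructor
      · exact Filter.Eventually.of_forall fun u => (hII2 u 0 r).1
      · have hmeas2 : AEStronglyMeasurable
            (fun u => ∫ v, ‖Kp (u, v)‖ ∂(volume.restrict (Ioc (0:ℝ) r)))
            (volume.restrict (Ioc (0:ℝ) r)) := hKpmeas.norm.integral_prod_right'
        refine MeasureTheory.Integrable.mono' (integrable_const (C * (M*M) * c₁)) hmeas2 ?_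
        filter_upwards [MeasureTheory.ae_restrict_mem measurableSet_Ioc] with u hu
        have huT : |u| ≤ T := abs_le.mpr ⟨by linarith [hu.1], le_trans hu.2 hrT.le⟩
        have hKu : IntegrableOn (fun v => Kp (u, v)) (Ioc (0:ℝ) r) volume := (hII2 u 0 r).1
        have hbint : IntegrableOn (fun v => C * |u - v| ^ α * (M*M)) (Ioc (0:ℝ) r) volume :=
          (((fbm_II_abs_rpow_sub hα u 0 r).const_mul C).mul_const (M*M)).1
        rw [Real.norm_eq_abs, abs_of_nonneg (integral_nonneg fun v => norm_nonneg _)]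
        calc (∫ v, ‖Kp (u, v)‖ ∂(volume.restrict (Ioc (0:ℝ) r)))
            ≤ ∫ v in Ioc (0:ℝ) r, C * |u - v| ^ α * (M*M) := by
              apply MeasureTheory.setIntegral_mono_on hKu.norm hbint measurableSet_Ioc
              intro v _
              rw [Real.norm_eq_abs, hKpdef]
              have hnn : (0:ℝ) ≤ C * |u - v| ^ α :=
                mul_nonneg hC.le (Real.rpow_nonneg (abs_nonneg _) α)
              calc |C * |u - v| ^ α * σ' u * σ' v|
                  = (C * |u - v| ^ α) * (|σ' u| * |σ' v|) := by
                    rw [abs_mul, abs_mul, abs_of_nonneg hnn, mul_assoc]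
                _ ≤ (C * |u - v| ^ α) * (M * M) :=
                    mul_le_mul_of_nonneg_left
                      (mul_le_mul (hM u) (hM v) (abs_nonneg _) hMnn) hnn
          _ = (C * (M*M)) * ∫ v in Ioc (0:ℝ) r, |u - v| ^ α := by
              rw [show (fun v => C * |u - v| ^ α * (M*M))
                  = fun v => (C * (M*M)) * |u - v| ^ α by funext v; ring]
              exact MeasureTheory.integral_const_mul _ _
          _ ≤ C * (M*M) * c₁ := by
              apply mul_le_mul_of_nonneg_left ?_ (by positivity)
              rw [hc₁def]
              exact fbm_setint_bound hα T u r huT hr0.le hrT.le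
    set sU : Set (ℝ × ℝ) := {p : ℝ × ℝ | p.1 < p.2} with hsUdef
    have hsU : MeasurableSet sU := (isOpen_lt continuous_fst continuous_snd).measurableSet
    have hgInt : Integrable (sU.indicator Kp)
        ((volume.restrict (Ioc (0:ℝ) r)).prod (volume.restrict (Ioc (0:ℝ) r))) :=
      hKpInt.indicator hsU
    have hg2Int : Integrable (sUᶜ.indicator Kp)
        ((volume.restrict (Ioc (0:ℝ) r)).prod (volume.restrict (Ioc (0:ℝ) r))) :=
      hKpInt.indicator hsU.compl
    have hLHS : (∫ u in (0:ℝ)..r, ∫ v in (0:ℝ)..r, C * |u - v| ^ α * σ' u * σ' v)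
        = ∫ u in Ioc (0:ℝ) r, ∫ v in Ioc (0:ℝ) r, Kp (u, v) := by
      rw [intervalIntegral.integral_of_le hr0.le]
      apply setIntegral_congr_fun measurableSet_Ioc
      intro u _
      dsimp only
      rw [intervalIntegral.integral_of_le hr0.le]
    have step1 : (∫ u in Ioc (0:ℝ) r, ∫ v in Ioc (0:ℝ) r, Kp (u, v))
        = (∫ u in Ioc (0:ℝ) r, ∫ v in Ioc (0:ℝ) r, sU.indicator Kp (u, v))
          + ∫ u in Ioc (0:ℝ) r, ∫ v in Ioc (0:ℝ) r, sUᶜ.indicator Kp (u, v) := by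
      have hpt : ∀ u v : ℝ, Kp (u, v) = sU.indicator Kp (u, v) + sUᶜ.indicator Kp (u, v) := by
        intro u v
        rw [← Pi.add_apply, Set.indicator_self_add_compl]
      simp only [hpt]
      exact MeasureTheory.integral_integral_add hgInt hg2Int
    have step2 : (∫ u in Ioc (0:ℝ) r, ∫ v in Ioc (0:ℝ) r, sU.indicator Kp (u, v))
        = ∫ v in Ioc (0:ℝ) r, S v * σ' v := by
      have hsw := MeasureTheory.integral_integral_swap
        (f := fun u v => sU.indicator Kp (u, v))
        (μ := volume.restrict (Ioc (0:ℝ) r)) (ν := volume.restrict (Ioc (0:ℝ) r)) hgInt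
      rw [hsw]
      apply setIntegral_congr_fun measurableSet_Ioc
      intro v hv
      dsimp only
      have h1 : ∀ u, sU.indicator Kp (u, v) = (Iio v).indicator (fun u => Kp (u, v)) u := by
        intro u
        by_cases h : u < v
        · rw [Set.indicator_of_mem (show (u, v) ∈ sU from h),
            Set.indicator_of_mem (show u ∈ Iio v from h)]
        · rw [Set.indicator_of_notMem (show (u, v) ∉ sU from h),
            Set.indicator_of_notMem (show u ∉ Iio v from h)]
      simp only [h1]
      rw [MeasureTheory.setIntegral_indicator measurableSet_Iio]
      have h2 : Ioc (0:ℝ) r ∩ Iio v = Ioo 0 v := by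
        ext u
        simp only [mem_inter_iff, mem_Ioc, mem_Iio, mem_Ioo]
        constructor
        · rintro ⟨⟨ha, _⟩, hb⟩; exact ⟨ha, hb⟩
        · rintro ⟨ha, hb⟩; exact ⟨⟨ha, le_trans hb.le hv.2⟩, hb⟩
      have hfin : ∫ u in (0:ℝ)..v, Kp (u, v) = S v * σ' v := by
        rw [show (fun u => Kp (u, v)) = fun u => (C * |v - u| ^ α * σ' u) * σ' v by
          funext u; simp only [hKpdef]; rw [abs_sub_comm]]
        rw [intervalIntegral.integral_mul_const]
      rw [h2, ← MeasureTheory.integral_Ioc_eq_integral_Ioo,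
        ← intervalIntegral.integral_of_le hv.1.le, hfin]
    have step3 : (∫ u in Ioc (0:ℝ) r, ∫ v in Ioc (0:ℝ) r, sUᶜ.indicator Kp (u, v))
        = ∫ u in Ioc (0:ℝ) r, σ' u * S u := by
      apply setIntegral_congr_fun measurableSet_Ioc
      intro u hu
      dsimp only
      have h1 : ∀ v, sUᶜ.indicator Kp (u, v) = (Iic u).indicator (fun v => Kp (u, v)) v := by
        intro v
        by_cases h : v ≤ u
        · rw [Set.indicator_of_mem (show (u, v) ∈ sUᶜ from not_lt.mpr h),
            Set.indicator_of_mem (show v ∈ Iic u from h)]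
        · rw [Set.indicator_of_notMem
            (show (u, v) ∉ sUᶜ from not_not.mpr (not_le.mp h)),
            Set.indicator_of_notMem (show v ∉ Iic u from h)]
      simp only [h1]
      rw [MeasureTheory.setIntegral_indicator measurableSet_Iic]
      have h2 : Ioc (0:ℝ) r ∩ Iic u = Ioc 0 u := by
        ext v
        simp only [mem_inter_iff, mem_Ioc, mem_Iic]
        constructor
        · rintro ⟨⟨ha, _⟩, hb⟩; exact ⟨ha, hb⟩
        · rintro ⟨ha, hb⟩; exact ⟨⟨ha, le_trans hb hu.2⟩, hb⟩
      have hfin : ∫ v in (0:ℝ)..u, Kp (u, v) = σ' u * S u := by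
        rw [show (fun v => Kp (u, v)) = fun v => σ' u * (C * |u - v| ^ α * σ' v) by
          funext v; simp only [hKpdef]; ring]
        rw [intervalIntegral.integral_const_mul]
      rw [h2, ← intervalIntegral.integral_of_le hu.1.le, hfin]
    -- integrability of the pieces for recombination
    have hSσInt : IntegrableOn (fun v => S v * σ' v) (Ioc (0:ℝ) r) volume := by
      have hcontOn : ContinuousOn (fun v => S v * σ' v) (Ioc (0:ℝ) r) := fun v hv =>
        ((hScont v hv.1).mul hσ'cont.continuousAt).continuousWithinAt
      apply Integrable.mono' (integrable_const ((C * M * c₁) * M))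
        (hcontOn.aestronglyMeasurable measurableSet_Ioc)
      filter_upwards [ae_restrict_mem measurableSet_Ioc] with v hv
      rw [Real.norm_eq_abs, abs_mul]
      exact mul_le_mul (hSbdd v ⟨hv.1, le_trans hv.2 hrT.le⟩) (hM v) (abs_nonneg _)
        (by positivity)
    have hσSInt : IntegrableOn (fun u => σ' u * S u) (Ioc (0:ℝ) r) volume := by
      apply hSσInt.congr_fun (fun u _ => mul_comm (S u) (σ' u)) measurableSet_Ioc
    have hRHS : (∫ u in (0:ℝ)..r, φh u)
        = (∫ v in Ioc (0:ℝ) r, S v * σ' v) + ∫ u in Ioc (0:ℝ) r, σ' u * S u := by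
      rw [intervalIntegral.integral_of_le hr0.le, ← MeasureTheory.integral_add hSσInt hσSInt]
      apply setIntegral_congr_fun measurableSet_Ioc
      intro u _
      simp only [hφhdef]
      ring
    rw [hLHS, step1, step2, step3, hRHS]
  -- FTC
  have hφhInt : IntervalIntegrable φh volume 0 t := by
    constructor
    · have hcontOn : ContinuousOn φh (Ioc (0:ℝ) t) := fun u hu =>
        (hφhCont u hu.1).continuousWithinAt
      apply Integrable.mono' (integrable_const (2 * M * (C * M * c₁)))
        (hcontOn.aestronglyMeasurable measurableSet_Ioc)
      filter_upwards [ae_restrict_mem measurableSet_Ioc] with u hu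
      rw [Real.norm_eq_abs]
      exact hφhBdd u ⟨hu.1, le_trans hu.2 htT.le⟩
    · rw [Set.Ioc_eq_empty (by linarith : ¬ t < (0:ℝ))]
      exact integrableOn_empty
  have hmeasAt : StronglyMeasurableAtFilter φh (𝓝 t) := by
    refine ⟨Ioi (0:ℝ), Ioi_mem_nhds ht0, ?_⟩
    have hco : ContinuousOn φh (Ioi (0:ℝ)) := fun u hu => (hφhCont u hu).continuousWithinAt
    exact hco.aestronglyMeasurable measurableSet_Ioi
  have hD : HasDerivAt (fun r => ∫ u in (0:ℝ)..r, φh u) (φh t) t :=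
    intervalIntegral.integral_hasDerivAt_right hφhInt hmeasAt (hφhCont t ht0)
  have hEq : (fun r => ∫ u in (0:ℝ)..r, ∫ v in (0:ℝ)..r,
        C * |u - v| ^ α * σ u * σ v)
      =ᶠ[𝓝 t] fun r => ∫ u in (0:ℝ)..r, φh u := by
    filter_upwards [Ioo_mem_nhds ht0 htT] with r hr
    rw [← key r hr]
    apply intervalIntegral.integral_congr
    intro u hu
    rw [uIcc_of_le hr.1.le] at hu
    dsimp only
    apply intervalIntegral.integral_congr
    intro v hv
    rw [uIcc_of_le hr.1.le] at hv
    dsimp only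
    rw [hσ'eq u ⟨hu.1, le_trans hu.2 hr.2.le⟩, hσ'eq v ⟨hv.1, le_trans hv.2 hr.2.le⟩]
  have hval : φh t = 2 * (∫ v in (0:ℝ)..t, C * |t - v| ^ α * σ v) * σ t := by
    have hst : (∫ v in (0:ℝ)..t, C * |t - v| ^ α * σ v) = S t := by
      simp only [hSdef]
      apply intervalIntegral.integral_congr
      intro v hv
      rw [uIcc_of_le ht0.le] at hv
      dsimp only
      rw [hσ'eq v ⟨hv.1, le_trans hv.2 htT.le⟩]
    rw [hst]
    simp only [hφhdef]
    rw [hσ'eq t ⟨ht0.le, htT.le⟩]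
    ring
  have hfinal := hD.congr_of_eventuallyEq hEq
  rwa [hval] at hfinal
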